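/- Let M : ℂ² → ℂ² be a ℂ-linear endomorphism that is not diagonalizable, let ζ ∈ ℂ be an eigenvalue of M, and let Λ ⊂ ℂ² be a subgroup (ℤ-submodule) that is free of rank 4 as a ℤ-module and spans ℂ² as a real vector space, with M(Λ) ⊆ Λ. Then the eigenspace E_ζ = ker(M − ζ·id) contains two elements of Λ that are linearly independent over ℝ; that is, the ℤ-module Λ ∩ E_ζ has rank 2 and is a lattice in the complex line E_ζ. -/

import Mathlib

set_option maxHeartbeats 1000000
set_option synthInstance.maxHeartbeats 200000

open Polynomial Module

/-- If `M` is a non-diagonalizable `ℂ`-linear endomorphism of `ℂ²` with eigenvalue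
`ζ`, preserving a subgroup `Λ ⊆ ℂ²` which is free of rank `4` over `ℤ` and spans
`ℂ²` over `ℝ`, then the eigenspace `ker (M − ζ·id)` contains two elements of `Λ`
which are linearly independent over `ℝ`. -/
theorem stmt7 (M : Module.End ℂ (Fin 2 → ℂ))
    (hnd : ¬ ∃ (b : Basis (Fin 2) ℂ (Fin 2 → ℂ)) (d : Fin 2 → ℂ),
      ∀ i, M (b i) = d i • b i)
    (ζ : ℂ) (hζ : Module.End.HasEigenvalue M ζ)
    (Λ : Submodule ℤ (Fin 2 → ℂ))
    (hfree : Nonempty (Basis (Fin 4) ℤ Λ))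
    (hspan : Submodule.span ℝ (Λ : Set (Fin 2 → ℂ)) = ⊤)
    (hM : ∀ v ∈ Λ, M v ∈ Λ) :
    ∃ v w : Fin 2 → ℂ, v ∈ Λ ∧ w ∈ Λ ∧ M v = ζ • v ∧ M w = ζ • w ∧
      LinearIndependent ℝ ![v, w] := by
  classical
  obtain ⟨e, he⟩ := hζ.exists_hasEigenvector
  have he0 : e ≠ 0 := he.2
  have heM : M e = ζ • e := he.apply_eq_smul
  set N : Module.End ℂ (Fin 2 → ℂ) := M - ζ • 1 with hNdef
  have hNapp : ∀ x, N x = M x - ζ • x := by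
    intro x; simp [hNdef]
  -- Step B : N * N = 0
  have hN2 : N * N = 0 := by
    have hfr : Module.finrank ℂ (Fin 2 → ℂ) = 2 := by simp
    obtain ⟨f, hfspan⟩ : ∃ f : Fin 2 → ℂ, f ∉ Submodule.span ℂ {e} := by
      by_contra hc
      push_neg at hc
      have htop : (Submodule.span ℂ {e} : Submodule ℂ (Fin 2 → ℂ)) = ⊤ :=
        Submodule.eq_top_iff'.2 hc
      have h1 : Module.finrank ℂ (Submodule.span ℂ ({e} : Set (Fin 2 → ℂ))) = 1 :=
        finrank_span_singleton he0
      rw [htop, finrank_top, hfr] at h1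
      norm_num at h1
    have hso : ∀ (s r : ℂ), s ≠ 0 → s • f = r • e → False := by
      intro s r hs hsr
      apply hfspan
      exact Submodule.mem_span_singleton.2 ⟨s⁻¹ * r, by
        rw [mul_smul, ← hsr, smul_smul, inv_mul_cancel₀ hs, one_smul]⟩
    have hef : LinearIndependent ℂ ![e, f] := by
      rw [linearIndependent_fin2]
      constructor
      · simp only [Matrix.cons_val_one, Matrix.head_cons]
        intro h0
        exact hfspan (by rw [show f = 0 from h0]; exact Submodule.zero_mem _)
      · intro a ha
        simp only [Matrix.cons_val_one, Matrix.head_cons, Matrix.cons_val_zero] at ha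
        by_cases ha0 : a = 0
        · rw [ha0, zero_smul] at ha; exact he0 ha.symm
        · exact hso a 1 ha0 (by rw [ha, one_smul])
    have hcard : Fintype.card (Fin 2) = Module.finrank ℂ (Fin 2 → ℂ) := by simp [hfr]
    set B := basisOfLinearIndependentOfCardEqFinrank hef hcard with hB
    have hBcoe : ⇑B = ![e, f] := coe_basisOfLinearIndependentOfCardEqFinrank hef hcard
    have hBtop : Submodule.span ℂ ({e, f} : Set (Fin 2 → ℂ)) = ⊤ := by
      have h1 := B.span_eq
      have hr : Set.range ⇑B = {e, f} := by
        rw [hBcoe]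
        ext x
        simp [Matrix.range_cons, Matrix.range_empty]
        tauto
      rwa [hr] at h1
    obtain ⟨a, c, hac⟩ : ∃ a c : ℂ, a • e + c • f = M f := by
      apply Submodule.mem_span_pair.1
      rw [hBtop]; trivial
    by_cases hcz : c = ζ
    · subst hcz
      have hNe : N e = 0 := by rw [hNapp, heM, sub_self]
      have hNf : N f = a • e := by
        rw [hNapp, ← hac, add_sub_assoc, sub_self, add_zero]
      refine LinearMap.ext fun x => ?_
      obtain ⟨p, q', hpq⟩ : ∃ p q' : ℂ, p • e + q' • f = x := by
        apply Submodule.mem_span_pair.1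
        rw [hBtop]; trivial
      have hxe : (N * N) x = p • N (N e) + q' • N (N f) := by
        rw [← hpq]
        simp only [Module.End.mul_apply, map_add, map_smul]
      rw [hxe, hNe, hNf, map_smul, hNe]
      simp
    · exfalso
      apply hnd
      set u : Fin 2 → ℂ := a • e + (c - ζ) • f with hu
      have hMu : M u = c • u := by
        rw [hu, map_add, map_smul, map_smul, heM, ← hac]
        rw [smul_add, smul_add, smul_smul, smul_smul, smul_smul, smul_smul, smul_smul]
        rw [← add_assoc]
        congr 1
        · rw [← add_smul]
          congr 1
          ring
        · congr 1
          ring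
      have hln : LinearIndependent ℂ ![e, u] := by
        rw [linearIndependent_fin2]
        constructor
        · simp only [Matrix.cons_val_one, Matrix.head_cons]
          intro h0
          rw [hu] at h0
          have : (c - ζ) • f = (-a) • e := by
            rw [neg_smul]
            apply eq_neg_of_add_eq_zero_left
            rw [add_comm]
            exact h0
          exact hso _ _ (sub_ne_zero.2 hcz) this
        · intro s hs
          simp only [Matrix.cons_val_one, Matrix.head_cons, Matrix.cons_val_zero] at hs
          by_cases hs0 : s = 0
          · rw [hs0, zero_smul] at hs; exact he0 hs.symm
          · rw [hu, smul_add, smul_smul, smul_smul] at hs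
            have : (s * (c - ζ)) • f = (1 - s * a) • e := by
              rw [sub_smul, one_smul, eq_sub_iff_add_eq, add_comm]
              exact hs
            exact hso _ _ (mul_ne_zero hs0 (sub_ne_zero.2 hcz)) this
      have hcard2 : Fintype.card (Fin 2) = Module.finrank ℂ (Fin 2 → ℂ) := by simp [hfr]
      set B2 := basisOfLinearIndependentOfCardEqFinrank hln hcard2 with hB2
      have hB2coe : ⇑B2 = ![e, u] := coe_basisOfLinearIndependentOfCardEqFinrank hln hcard2
      refine ⟨B2, ![ζ, c], fun i => ?_⟩
      have hi := hB2coe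
      fin_cases i
      · show M (B2 0) = ![ζ, c] 0 • B2 0
        rw [show B2 0 = e by rw [hi]; rfl]
        simpa using heM
      · show M (B2 1) = ![ζ, c] 1 • B2 1
        rw [show B2 1 = u by rw [hi]; rfl]
        simpa using hMu
  -- N ≠ 0
  have hNne : N ≠ 0 := by
    intro h0
    apply hnd
    refine ⟨Pi.basisFun ℂ (Fin 2), fun _ => ζ, fun i => ?_⟩
    have := congrArg (fun (f : Module.End ℂ (Fin 2 → ℂ)) => f (Pi.basisFun ℂ (Fin 2) i)) h0
    simpa [hNapp, sub_eq_zero] using this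
  -- the integer char poly
  obtain ⟨bΛ⟩ := hfree
  haveI : Module.Free ℤ Λ := Module.Free.of_basis bΛ
  haveI : Module.Finite ℤ Λ := Module.Finite.of_basis bΛ
  set Mres : Λ →ₗ[ℤ] Λ := (M.restrictScalars ℤ).restrict (p := Λ) (q := Λ)
    (fun v hv => hM v hv) with hMres
  set μ : ℤ[X] := Mres.charpoly with hμdef
  have hμ0 : Polynomial.aeval Mres μ = 0 := Mres.aeval_self_charpoly
  -- powers commute with restriction
  have hpow : ∀ (n : ℕ) (v : Λ), (((Mres ^ n) v : Λ) : Fin 2 → ℂ) = (M ^ n) (v : Fin 2 → ℂ) := by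
    intro n
    induction n with
    | zero => intro v; simp
    | succ n ih =>
      intro v
      rw [pow_succ, pow_succ]
      simp only [Module.End.mul_apply]
      rw [ih (Mres v)]
      have : ((Mres v : Λ) : Fin 2 → ℂ) = M (v : Fin 2 → ℂ) := by
        simp [hMres, LinearMap.restrict_apply]; rfl
      rw [this]
  have haevalΛ : ∀ (p : ℤ[X]) (v : Λ),
      ((Polynomial.aeval Mres p v : Λ) : Fin 2 → ℂ) = Polynomial.aeval M p (v : Fin 2 → ℂ) := by
    intro p
    induction p using Polynomial.induction_on' with
    | add p q hp hq => intro v; simp [hp v, hq v]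
    | monomial n a =>
      intro v
      simp only [Polynomial.aeval_monomial, Module.End.mul_apply, Module.algebraMap_end_apply,
        Module.End.intCast_apply]
      rw [Submodule.coe_smul, hpow n v]
  -- μ(M) kills Λ
  have hμΛ : ∀ v ∈ Λ, Polynomial.aeval M μ v = 0 := by
    intro v hv
    have := haevalΛ μ ⟨v, hv⟩
    rw [hμ0] at this
    simpa using this.symm
  -- μ(M) = 0
  have hμM : Polynomial.aeval M μ = 0 := by
    have hle : Submodule.span ℝ (Λ : Set (Fin 2 → ℂ)) ≤
        LinearMap.ker ((Polynomial.aeval M μ).restrictScalars ℝ) := by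
      rw [Submodule.span_le]
      intro v hv
      simpa [LinearMap.mem_ker] using hμΛ v hv
    rw [hspan, top_le_iff] at hle
    refine LinearMap.ext fun x => ?_
    have : x ∈ LinearMap.ker ((Polynomial.aeval M μ).restrictScalars ℝ) := by rw [hle]; trivial
    simpa [LinearMap.mem_ker] using this
  -- ζ is a root of μ
  have hζμ : Polynomial.aeval ζ μ = 0 := by
    have h1 : Polynomial.aeval M (μ.map (algebraMap ℤ ℂ)) e
        = Polynomial.eval ζ (μ.map (algebraMap ℤ ℂ)) • e :=
      Module.End.aeval_apply_of_hasEigenvector he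
    rw [Polynomial.aeval_map_algebraMap, hμM] at h1
    have : Polynomial.eval ζ (μ.map (algebraMap ℤ ℂ)) = 0 := by
      rcases smul_eq_zero.1 h1.symm with h | h
      · exact h
      · exact absurd h he0
    rwa [Polynomial.eval_map, ← Polynomial.aeval_def] at this
  have hint : IsIntegral ℚ ζ := by
    refine ⟨μ.map (algebraMap ℤ ℚ), Mres.charpoly_monic.map _, ?_⟩
    rw [← Polynomial.aeval_def, Polynomial.aeval_map_algebraMap]
    exact hζμ
  -- minimal polynomial
  set g : ℚ[X] := minpoly ℚ ζ with hgdef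
  have hgζ : Polynomial.aeval ζ g = 0 := minpoly.aeval ℚ ζ
  have hgsep : g.Separable := (minpoly.irreducible hint).separable
  set gc : ℂ[X] := g.map (algebraMap ℚ ℂ) with hgcdef
  have hgcsf : Squarefree gc := (hgsep.map).squarefree
  have hgcroot : gc.IsRoot ζ := by
    rw [Polynomial.IsRoot, Polynomial.eval_map, ← Polynomial.aeval_def]; exact hgζ
  obtain ⟨h, hgch⟩ : (X - C ζ) ∣ gc := Polynomial.dvd_iff_isRoot.2 hgcroot
  have hhζ : Polynomial.eval ζ h ≠ 0 := by
    intro h0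
    obtain ⟨k, hk⟩ : (X - C ζ) ∣ h := Polynomial.dvd_iff_isRoot.2 h0
    have : (X - C ζ) * (X - C ζ) ∣ gc := ⟨k, by rw [hgch, hk]; ring⟩
    have := hgcsf _ this
    exact (Polynomial.not_isUnit_X_sub_C ζ) this
  -- integer normalization
  set q : ℤ[X] := IsLocalization.integerNormalization (nonZeroDivisors ℤ) g with hqdef
  obtain ⟨b, hb⟩ := IsLocalization.integerNormalization_map_to_map (nonZeroDivisors ℤ) g
  have hbne : (b : ℤ) ≠ 0 := nonZeroDivisors.coe_ne_zero b
  -- q over ℂ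
  have hqc : q.map (algebraMap ℤ ℂ) = C ((b : ℤ) : ℂ) * gc := by
    have h2 : q.map (algebraMap ℤ ℂ) = (q.map (algebraMap ℤ ℚ)).map (algebraMap ℚ ℂ) := by
      rw [Polynomial.map_map, ← IsScalarTower.algebraMap_eq]
    rw [h2, hb, ← Int.cast_smul_eq_zsmul ℚ, Algebra.smul_def, Polynomial.map_mul]
    congr 1
    rw [Polynomial.algebraMap_eq, Polynomial.map_C]
    norm_num
  set T : Module.End ℂ (Fin 2 → ℂ) := Polynomial.aeval M q with hTdef
  set H : Module.End ℂ (Fin 2 → ℂ) := Polynomial.aeval M h with hHdef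
  have haevalX : Polynomial.aeval M (X - C ζ) = N := by
    simp [hNdef, Polynomial.aeval_def, Module.algebraMap_end_eq_smul_id]
    rfl
  have hT : T = ((b : ℤ) : ℂ) • (N * H) := by
    rw [hTdef, ← Polynomial.aeval_map_algebraMap ℂ, hqc, map_mul, Polynomial.aeval_C, hgch,
      map_mul, haevalX]
    simp [Algebra.smul_def, hHdef]
  have hNH : N * H = H * N := by
    rw [← haevalX, hHdef, ← map_mul, ← map_mul, mul_comm]
  -- N ∘ T = 0
  have hNT : ∀ x, N (T x) = 0 := by
    intro x
    have : N * T = 0 := by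
      rw [hT, mul_smul_comm, ← mul_assoc, hN2, zero_mul, smul_zero]
    calc N (T x) = (N * T) x := rfl
      _ = 0 := by rw [this]; rfl
  -- T sends Λ to Λ
  have hTΛ : ∀ v ∈ Λ, T v ∈ Λ := by
    have key : ∀ (p : ℤ[X]), ∀ v ∈ Λ, Polynomial.aeval M p v ∈ Λ := by
      intro p
      induction p using Polynomial.induction_on' with
      | add p q hp hq =>
        intro v hv
        rw [map_add]
        exact Submodule.add_mem _ (hp v hv) (hq v hv)
      | monomial n a =>
        intro v hv
        have hpowmem : ∀ m : ℕ, (M ^ m) v ∈ Λ := by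
          intro m
          induction m with
          | zero => simpa using hv
          | succ m ih =>
            rw [pow_succ', Module.End.mul_apply]
            exact hM _ ih
        simp only [Polynomial.aeval_monomial, Module.End.mul_apply, Module.algebraMap_end_apply,
          Module.End.intCast_apply]
        exact Submodule.smul_mem _ a (hpowmem n)
    exact key q
  -- T ≠ 0 on some lattice-independent data: find f with N f ≠ 0
  obtain ⟨f, hf⟩ : ∃ f, N f ≠ 0 := by
    by_contra hc
    push_neg at hc
    exact hNne (LinearMap.ext fun x => hc x)
  have hNf : M (N f) = ζ • N f := by
    have : N (N f) = 0 := by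
      calc N (N f) = (N * N) f := rfl
        _ = 0 := by rw [hN2]; rfl
    rw [hNapp] at this
    rwa [sub_eq_zero] at this
  have hev : M.HasEigenvector ζ (N f) := by
    refine ⟨Module.End.mem_eigenspace_iff.2 hNf, hf⟩
  have hTf : T f ≠ 0 := by
    rw [hT, hNH]
    simp only [LinearMap.smul_apply, Module.End.mul_apply]
    have : H (N f) = Polynomial.eval ζ h • N f := Module.End.aeval_apply_of_hasEigenvector hev
    rw [this]
    simp only [smul_smul]
    intro hcontra
    rcases smul_eq_zero.1 hcontra with h1 | h1
    · rcases mul_eq_zero.1 h1 with h2 | h2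
      · exact (Int.cast_ne_zero.2 hbne) h2
      · exact hhζ h2
    · exact hf h1
  -- find v ∈ Λ with T v ≠ 0
  have hTspan : ∀ x : Fin 2 → ℂ, ∀ S : Submodule ℝ (Fin 2 → ℂ),
      (∀ v ∈ Λ, T v ∈ S) → T x ∈ S := by
    intro x S hS
    have hle : Submodule.span ℝ (Λ : Set (Fin 2 → ℂ)) ≤
        Submodule.comap (T.restrictScalars ℝ) S := by
      rw [Submodule.span_le]
      intro v hv
      simpa using hS v hv
    rw [hspan, top_le_iff] at hle
    have : x ∈ Submodule.comap (T.restrictScalars ℝ) S := by rw [hle]; trivial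
    simpa using this
  obtain ⟨v, hvΛ, hTv⟩ : ∃ v ∈ Λ, T v ≠ 0 := by
    by_contra hc
    push_neg at hc
    have : T f ∈ (⊥ : Submodule ℝ (Fin 2 → ℂ)) := by
      apply hTspan
      intro v hv
      simpa using hc v hv
    exact hTf (by simpa using this)
  -- find w ∈ Λ with T w ∉ span ℝ {T v}
  obtain ⟨w, hwΛ, hTw⟩ : ∃ w ∈ Λ, T w ∉ Submodule.span ℝ {T v} := by
    by_contra hc
    push_neg at hc
    have hIv : T (Complex.I • v) ∈ Submodule.span ℝ {T v} := hTspan _ _ hc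
    rw [map_smul] at hIv
    obtain ⟨r, hr⟩ := Submodule.mem_span_singleton.1 hIv
    have : (Complex.I - (r : ℂ)) • T v = 0 := by
      rw [sub_smul, ← hr]
      rw [← algebraMap_smul ℂ r (T v)]
      simp [sub_self]
    rcases smul_eq_zero.1 this with h1 | h1
    · have := congrArg Complex.im (sub_eq_zero.1 h1)
      simp at this
    · exact hTv h1
  refine ⟨T v, T w, hTΛ v hvΛ, hTΛ w hwΛ, ?_, ?_, ?_⟩
  · have := hNT v; rw [hNapp] at this; rwa [sub_eq_zero] at this
  · have := hNT w; rw [hNapp] at this; rwa [sub_eq_zero] at this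
  · rw [linearIndependent_fin2]
    constructor
    · intro h0
      simp only [Matrix.cons_val_one, Matrix.head_cons] at h0
      exact hTw (by rw [show T w = 0 from h0]; exact Submodule.zero_mem _)
    · intro a ha
      simp only [Matrix.cons_val_one, Matrix.head_cons, Matrix.cons_val_zero] at ha
      by_cases ha0 : a = 0
      · rw [ha0, zero_smul] at ha; exact hTv ha.symm
      · apply hTw
        rw [Submodule.mem_span_singleton]
        exact ⟨a⁻¹, by rw [← ha, smul_smul, inv_mul_cancel₀ ha0, one_smul]⟩
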